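/- Let G be a bipartite graph with parts L and R and a perfect matching M. Orient every edge of G from L to R, and additionally orient each matching edge of M also from R to L (so M-edges are bidirected). Let S be a vertex cover of G and M' ⊆ M the set of matching edges with both endpoints in S. Let C contain exactly one endpoint of each edge in M'. Then in the resulting directed graph, every directed path that starts at a vertex of (S ∩ R)\C and ends at a vertex of (S ∩ L)\C contains a vertex of C. -/
import Mathlib


variable {V : Type*}

/-- `S` is a vertex cover of `G`. -/
def IsVC (G : SimpleGraph V) (S : Set V) : Prop :=
  ∀ ⦃u v⦄, G.Adj u v → u ∈ S ∨ v ∈ S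

/-- orient all edges of the bipartite graph `G` from `L` to `R`, and in
addition orient the perfect-matching edges (given by `m`) from `R` to `L`. If `S` is a
vertex cover, `M'` the matching edges with both endpoints in `S`, and `C` contains
exactly one endpoint of each `M'`-edge, then every directed path from `(S ∩ R) \ C` to
`(S ∩ L) \ C` contains a vertex of `C`. -/
theorem matching_cut_in_digraph (G : SimpleGraph V) (L R : Set V)
    (hdisj : Disjoint L R)
    (hbip : ∀ ⦃u v⦄, G.Adj u v → (u ∈ L ∧ v ∈ R) ∨ (u ∈ R ∧ v ∈ L))
    (m : V → V) (hm : ∀ v, m (m v) = v ∧ m v ≠ v ∧ G.Adj v (m v))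
    (S : Set V) (hS : IsVC G S)
    (C : Set V)
    (hC1 : ∀ v ∈ C, v ∈ S ∧ m v ∈ S)
    (hC2 : ∀ v, v ∈ S → m v ∈ S → (v ∈ C ↔ m v ∉ C)) :
    ∀ s ∈ (S ∩ R) \ C, ∀ t ∈ (S ∩ L) \ C,
      ¬ Relation.ReflTransGen
        (fun a b => ((G.Adj a b ∧ a ∈ L ∧ b ∈ R) ∨
            (G.Adj a b ∧ a ∈ R ∧ b ∈ L ∧ m a = b)) ∧ a ∉ C ∧ b ∉ C)
        s t := by
  intro s hs t ht hpath
  -- invariant along the walk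
  have inv : ∀ v, Relation.ReflTransGen
      (fun a b => ((G.Adj a b ∧ a ∈ L ∧ b ∈ R) ∨
          (G.Adj a b ∧ a ∈ R ∧ b ∈ L ∧ m a = b)) ∧ a ∉ C ∧ b ∉ C) s v →
      (v ∈ R ∧ v ∈ S ∧ v ∉ C) ∨ (v ∈ L ∧ v ∉ S) := by
    intro v h
    induction h with
    | refl => exact Or.inl ⟨hs.1.2, hs.1.1, hs.2⟩
    | tail _ hstep ih =>
      rename_i b c _
      obtain ⟨hrel, hbC, hcC⟩ := hstep
      rcases ih with ⟨hbR, hbS, hbCn⟩ | ⟨hbL, hbSn⟩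
      · rcases hrel with ⟨_, hbL, _⟩ | ⟨_, _, hcL, hmc⟩
        · exact absurd hbR (Set.disjoint_left.1 hdisj hbL)
        · -- matching step from b ∈ S \ C : partner must be outside S
          right
          refine ⟨hcL, fun hcS => ?_⟩
          have hiff := hC2 b hbS (hmc ▸ hcS)
          have : m b ∈ C := not_not.mp (fun h => hbCn (hiff.mpr h))
          exact hcC (hmc ▸ this)
      · rcases hrel with ⟨hadj, _, hcR⟩ | ⟨_, hbR, _, _⟩
        · left
          refine ⟨hcR, ?_, hcC⟩
          rcases hS hadj with hb | hc
          · exact absurd hb hbSn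
          · exact hc
        · exact absurd hbR (Set.disjoint_left.1 hdisj hbL)
  rcases inv t hpath with ⟨htR, _, _⟩ | ⟨_, htS⟩
  · exact Set.disjoint_left.1 hdisj ht.1.2 htR
  · exact htS ht.1.1
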